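/- Let β > 0 and C > 0 be fixed. For each Λ > 0 let ε(Λ) : {1,2,...} → ℝ satisfy |ε_k(Λ) − π²k²/Λ²| ≤ C for all k ≥ 1, and suppose that for every μ ∈ ℝ the thermodynamic limit Ω_μ^{(V)} = lim_{Λ→∞} (1/Λ) Σ_{k=1}^∞ ln(1 + e^{β(μ−ε_k(Λ))}) exists. Let Ω_μ^{(0)} = (1/π) ∫_0^∞ ln(1 + e^{β(μ−p²)}) dp. Then Ω_μ^{(V)}/Ω_μ^{(0)} → 1 as μ → ∞. -/

import Mathlib

open Real Filter MeasureTheory Set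

noncomputable def G (β ν p : ℝ) : ℝ := Real.log (1 + Real.exp (β * (ν - p ^ 2)))

/-- Logarithm of the grand canonical partition function of the Fermi gas with
one-particle eigenvalues `ε` and chemical potential `μ`. -/
noncomputable def lnXi (β μ : ℝ) (ε : ℕ+ → ℝ) : ℝ :=
  ∑' k : ℕ+, Real.log (1 + Real.exp (β * (μ - ε k)))


lemma lg_nonneg (x : ℝ) : 0 ≤ Real.log (1 + Real.exp x) :=
  Real.log_nonneg (by linarith [Real.exp_pos x])

lemma lg_le_exp (x : ℝ) : Real.log (1 + Real.exp x) ≤ Real.exp x := by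
  have := Real.log_le_sub_one_of_pos (x := 1 + Real.exp x) (by positivity)
  linarith

lemma lg_ge (x : ℝ) : x ≤ Real.log (1 + Real.exp x) := by
  calc x = Real.log (Real.exp x) := (Real.log_exp x).symm
  _ ≤ _ := Real.log_le_log (Real.exp_pos x) (by linarith)

lemma lg_mono {x y : ℝ} (h : x ≤ y) :
    Real.log (1 + Real.exp x) ≤ Real.log (1 + Real.exp y) :=
  Real.log_le_log (by positivity) (by linarith [Real.exp_le_exp.2 h])

lemma lg_shift {x c : ℝ} (hc : 0 ≤ c) :
    Real.log (1 + Real.exp (x + c)) ≤ Real.log (1 + Real.exp x) + c := by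
  have h1 : 1 + Real.exp (x + c) ≤ Real.exp c * (1 + Real.exp x) := by
    rw [Real.exp_add]
    have := Real.one_le_exp hc
    nlinarith [Real.exp_pos x, Real.exp_pos c]
  calc Real.log (1 + Real.exp (x + c)) ≤ Real.log (Real.exp c * (1 + Real.exp x)) :=
        Real.log_le_log (by positivity) h1
  _ = c + Real.log (1 + Real.exp x) := by
        rw [Real.log_mul (by positivity) (by positivity), Real.log_exp]
  _ = _ := by ring

lemma G_nonneg (β ν p : ℝ) : 0 ≤ G β ν p := lg_nonneg _

lemma G_cont (β ν : ℝ) : Continuous (G β ν) := by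
  unfold G
  exact (continuous_const.add ((continuous_const.mul
    (continuous_const.sub (continuous_pow 2))).rexp)).log
    (fun p => (add_pos one_pos (Real.exp_pos _)).ne')

lemma G_le_exp {β : ℝ} (ν p : ℝ) : G β ν p ≤ Real.exp (β * ν) * Real.exp (-β * p ^ 2) := by
  rw [← Real.exp_add]
  calc G β ν p ≤ Real.exp (β * (ν - p ^ 2)) := lg_le_exp _
  _ = Real.exp (β * ν + -β * p ^ 2) := by ring_nf

lemma G_anti {β ν : ℝ} (hβ : 0 < β) {p q : ℝ} (hp : 0 ≤ p) (hpq : p ≤ q) :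
    G β ν q ≤ G β ν p := by
  apply lg_mono
  have : p ^ 2 ≤ q ^ 2 := by nlinarith
  nlinarith

lemma G_mono_nu {β : ℝ} (hβ : 0 < β) {ν ν' : ℝ} (h : ν ≤ ν') (p : ℝ) :
    G β ν p ≤ G β ν' p := by
  apply lg_mono; nlinarith

lemma G_integrable {β : ℝ} (hβ : 0 < β) (ν : ℝ) : Integrable (G β ν) := by
  apply Integrable.mono' ((integrable_exp_neg_mul_sq hβ).const_mul (Real.exp (β * ν)))
    (G_cont β ν).aestronglyMeasurable
  filter_upwards with p
  rw [Real.norm_eq_abs, abs_of_nonneg (G_nonneg _ _ _)]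
  exact G_le_exp ν p



lemma free_summable {β Λ : ℝ} (hβ : 0 < β) (hΛ : 0 < Λ) (ν : ℝ) :
    Summable (fun k : ℕ+ => G β ν (π * k / Λ)) := by
  set r : ℝ := Real.exp (-(β * π ^ 2 / Λ ^ 2)) with hr
  have hrpos : 0 < β * π ^ 2 / Λ ^ 2 := by positivity
  have hr1 : r < 1 := Real.exp_lt_one_iff.2 (by linarith)
  have hr0 : 0 ≤ r := Real.exp_nonneg _
  have hgeo : Summable (fun n : ℕ => Real.exp (β * ν) * r ^ n) :=
    (summable_geometric_of_lt_one hr0 hr1).mul_left _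
  apply Summable.of_nonneg_of_le (fun k => G_nonneg _ _ _) ?_ (hgeo.subtype _)
  intro k
  have hk1 : (1 : ℝ) ≤ ((k : ℕ) : ℝ) := by exact_mod_cast (k.2 : 1 ≤ (k : ℕ))
  calc G β ν (π * k / Λ) ≤ Real.exp (β * ν) * Real.exp (-β * (π * k / Λ) ^ 2) := G_le_exp _ _
  _ ≤ Real.exp (β * ν) * r ^ (k : ℕ) := by
      apply mul_le_mul_of_nonneg_left ?_ (Real.exp_nonneg _)
      rw [hr, ← Real.exp_nat_mul]
      apply Real.exp_le_exp.2
      have e : (π * ((k:ℕ):ℝ) / Λ) ^ 2 = π ^ 2 * ((k:ℕ):ℝ) ^ 2 / Λ ^ 2 := by ring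
      rw [e]
      have h2 : ((k:ℕ):ℝ) ≤ ((k:ℕ):ℝ) ^ 2 := by nlinarith
      have := mul_le_mul_of_nonneg_left h2 (le_of_lt hrpos)
      have e2 : β * (π ^ 2 * ((k:ℕ):ℝ) ^ 2 / Λ ^ 2) = β * π ^ 2 / Λ ^ 2 * ((k:ℕ):ℝ) ^ 2 := by ring
      nlinarith

lemma union_upper {c : ℝ} (hc : 0 < c) :
    (⋃ k : ℕ+, Ioc (c * (((k : ℕ) : ℝ) - 1)) (c * ((k : ℕ) : ℝ))) = Ioi 0 := by
  ext p
  simp only [mem_iUnion, mem_Ioc, mem_Ioi]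
  constructor
  · rintro ⟨k, h1, h2⟩
    have hk1 : (1 : ℝ) ≤ ((k : ℕ) : ℝ) := by exact_mod_cast k.2
    nlinarith
  · intro hp
    have hpc : 0 < p / c := by positivity
    refine ⟨⟨⌈p / c⌉₊, Nat.ceil_pos.2 hpc⟩, ?_, ?_⟩
    · have h := Nat.ceil_lt_add_one (le_of_lt hpc)
      show c * ((⌈p / c⌉₊ : ℝ) - 1) < p
      rw [← lt_div_iff₀' hc]
      linarith
    · have h := Nat.le_ceil (p / c)
      show p ≤ c * (⌈p / c⌉₊ : ℝ)
      rw [← div_le_iff₀' hc]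
      exact h

lemma union_lower {c : ℝ} (hc : 0 < c) :
    (⋃ k : ℕ+, Ioc (c * ((k : ℕ) : ℝ)) (c * (((k : ℕ) : ℝ) + 1))) = Ioi c := by
  ext p
  simp only [mem_iUnion, mem_Ioc, mem_Ioi]
  constructor
  · rintro ⟨k, h1, h2⟩
    have hk1 : (1 : ℝ) ≤ ((k : ℕ) : ℝ) := by exact_mod_cast k.2
    nlinarith
  · intro hp
    have hpc : 1 < p / c := (one_lt_div hc).2 hp
    have h2 : 1 < ⌈p / c⌉₊ := by
      rw [Nat.lt_ceil]; exact_mod_cast hpc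
    have key : ∃ k : ℕ, 0 < k ∧ c * (k:ℝ) < p ∧ p ≤ c * ((k:ℝ) + 1) := by
      refine ⟨⌈(p / c : ℝ)⌉₊ - 1, by omega, ?_, ?_⟩
      · have h := Nat.ceil_lt_add_one (by positivity : (0:ℝ) ≤ p / c)
        rw [Nat.cast_sub (by omega), Nat.cast_one, ← lt_div_iff₀' hc]
        linarith
      · have h := Nat.le_ceil (p / c)
        rw [Nat.cast_sub (by omega), Nat.cast_one, ← div_le_iff₀' hc]
        linarith
    obtain ⟨k, hk, h1, h2⟩ := key
    exact ⟨⟨k, hk⟩, h1, h2⟩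

lemma disj_upper {c : ℝ} (hc : 0 < c) :
    Pairwise (Function.onFun Disjoint
      (fun k : ℕ+ => Ioc (c * (((k : ℕ) : ℝ) - 1)) (c * ((k : ℕ) : ℝ)))) := by
  intro k l hkl
  rw [Function.onFun, Set.Ioc_disjoint_Ioc]
  rcases lt_or_gt_of_ne hkl with h | h
  · have : ((k:ℕ):ℝ) ≤ ((l:ℕ):ℝ) - 1 := by
      have : (k:ℕ) < (l:ℕ) := by exact_mod_cast h
      have : ((k:ℕ):ℝ) + 1 ≤ ((l:ℕ):ℝ) := by exact_mod_cast this
      linarith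
    calc min (c * ((k:ℕ):ℝ)) (c * ((l:ℕ):ℝ)) ≤ c * ((k:ℕ):ℝ) := min_le_left _ _
    _ ≤ c * (((l:ℕ):ℝ) - 1) := by nlinarith
    _ ≤ _ := le_max_right _ _
  · have : ((l:ℕ):ℝ) ≤ ((k:ℕ):ℝ) - 1 := by
      have : (l:ℕ) < (k:ℕ) := by exact_mod_cast h
      have : ((l:ℕ):ℝ) + 1 ≤ ((k:ℕ):ℝ) := by exact_mod_cast this
      linarith
    calc min (c * ((k:ℕ):ℝ)) (c * ((l:ℕ):ℝ)) ≤ c * ((l:ℕ):ℝ) := min_le_right _ _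
    _ ≤ c * (((k:ℕ):ℝ) - 1) := by nlinarith
    _ ≤ _ := le_max_left _ _

lemma disj_lower {c : ℝ} (hc : 0 < c) :
    Pairwise (Function.onFun Disjoint
      (fun k : ℕ+ => Ioc (c * ((k : ℕ) : ℝ)) (c * (((k : ℕ) : ℝ) + 1)))) := by
  intro k l hkl
  rw [Function.onFun, Set.Ioc_disjoint_Ioc]
  rcases lt_or_gt_of_ne hkl with h | h
  · have : ((k:ℕ):ℝ) + 1 ≤ ((l:ℕ):ℝ) := by
      have : (k:ℕ) < (l:ℕ) := by exact_mod_cast h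
      exact_mod_cast this
    calc min (c * (((k:ℕ):ℝ) + 1)) (c * (((l:ℕ):ℝ) + 1)) ≤ c * (((k:ℕ):ℝ) + 1) :=
      min_le_left _ _
    _ ≤ c * ((l:ℕ):ℝ) := by nlinarith
    _ ≤ _ := le_max_right _ _
  · have : ((l:ℕ):ℝ) + 1 ≤ ((k:ℕ):ℝ) := by
      have : (l:ℕ) < (k:ℕ) := by exact_mod_cast h
      exact_mod_cast this
    calc min (c * (((k:ℕ):ℝ) + 1)) (c * (((l:ℕ):ℝ) + 1)) ≤ c * (((l:ℕ):ℝ) + 1) :=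
      min_le_right _ _
    _ ≤ c * ((k:ℕ):ℝ) := by nlinarith
    _ ≤ _ := le_max_left _ _

lemma sum_le_integral {β Λ : ℝ} (hβ : 0 < β) (hΛ : 0 < Λ) (ν : ℝ) :
    (π / Λ) * ∑' k : ℕ+, G β ν (π * k / Λ) ≤ ∫ p in Ioi (0:ℝ), G β ν p := by
  set c : ℝ := π / Λ with hcdef
  have hc : 0 < c := by rw [hcdef]; positivity
  have hs : HasSum (fun k : ℕ+ => ∫ p in Ioc (c * (((k:ℕ):ℝ) - 1)) (c * ((k:ℕ):ℝ)), G β ν p)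
      (∫ p in Ioi (0:ℝ), G β ν p) := by
    have h := hasSum_integral_iUnion
      (s := fun k : ℕ+ => Ioc (c * (((k:ℕ):ℝ) - 1)) (c * ((k:ℕ):ℝ)))
      (fun _ => measurableSet_Ioc) (disj_upper hc) ((G_integrable hβ ν).integrableOn)
    rwa [union_upper hc] at h
  rw [← hs.tsum_eq, ← tsum_mul_left]
  apply Summable.tsum_le_tsum _ ((free_summable hβ hΛ ν).mul_left _) hs.summable
  intro k
  have hk1 : (1 : ℝ) ≤ ((k:ℕ):ℝ) := by exact_mod_cast k.2
  have harg : π * ((k:ℕ):ℝ) / Λ = c * ((k:ℕ):ℝ) := by rw [hcdef]; ring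
  have hvol : (volume (Ioc (c * (((k:ℕ):ℝ) - 1)) (c * ((k:ℕ):ℝ)))).toReal = c := by
    rw [Real.volume_Ioc, ENNReal.toReal_ofReal (by nlinarith)]
    ring
  calc c * G β ν (π * ((k:ℕ):ℝ) / Λ)
      = ∫ _ in Ioc (c * (((k:ℕ):ℝ) - 1)) (c * ((k:ℕ):ℝ)), G β ν (c * ((k:ℕ):ℝ)) := by
        rw [setIntegral_const, measureReal_def, hvol, harg, smul_eq_mul]
  _ ≤ ∫ p in Ioc (c * (((k:ℕ):ℝ) - 1)) (c * ((k:ℕ):ℝ)), G β ν p := by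
        apply setIntegral_mono_on
          (integrableOn_const measure_Ioc_lt_top.ne)
          ((G_integrable hβ ν).integrableOn) measurableSet_Ioc
        intro x hx
        exact G_anti hβ (by nlinarith [hx.1]) hx.2

lemma integral_le_sum {β Λ : ℝ} (hβ : 0 < β) (hΛ : 0 < Λ) (ν : ℝ) :
    ∫ p in Ioi (π / Λ), G β ν p ≤ (π / Λ) * ∑' k : ℕ+, G β ν (π * k / Λ) := by
  set c : ℝ := π / Λ with hcdef
  have hc : 0 < c := by rw [hcdef]; positivity
  have hs : HasSum (fun k : ℕ+ => ∫ p in Ioc (c * ((k:ℕ):ℝ)) (c * (((k:ℕ):ℝ) + 1)), G β ν p)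
      (∫ p in Ioi c, G β ν p) := by
    have h := hasSum_integral_iUnion
      (s := fun k : ℕ+ => Ioc (c * ((k:ℕ):ℝ)) (c * (((k:ℕ):ℝ) + 1)))
      (fun _ => measurableSet_Ioc) (disj_lower hc) ((G_integrable hβ ν).integrableOn)
    rwa [union_lower hc] at h
  rw [← hs.tsum_eq, ← tsum_mul_left]
  apply Summable.tsum_le_tsum _ hs.summable ((free_summable hβ hΛ ν).mul_left _)
  intro k
  have hk1 : (1 : ℝ) ≤ ((k:ℕ):ℝ) := by exact_mod_cast k.2
  have harg : π * ((k:ℕ):ℝ) / Λ = c * ((k:ℕ):ℝ) := by rw [hcdef]; ring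
  have hvol : (volume (Ioc (c * ((k:ℕ):ℝ)) (c * (((k:ℕ):ℝ) + 1)))).toReal = c := by
    rw [Real.volume_Ioc, ENNReal.toReal_ofReal (by nlinarith)]
    ring
  calc (∫ p in Ioc (c * ((k:ℕ):ℝ)) (c * (((k:ℕ):ℝ) + 1)), G β ν p)
      ≤ ∫ _ in Ioc (c * ((k:ℕ):ℝ)) (c * (((k:ℕ):ℝ) + 1)), G β ν (c * ((k:ℕ):ℝ)) := by
        apply setIntegral_mono_on ((G_integrable hβ ν).integrableOn)
          (integrableOn_const measure_Ioc_lt_top.ne) measurableSet_Ioc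
        intro x hx
        exact G_anti hβ (by nlinarith [hx.1]) (le_of_lt hx.1)
  _ = c * G β ν (π * ((k:ℕ):ℝ) / Λ) := by
        rw [setIntegral_const, measureReal_def, hvol, harg, smul_eq_mul]

lemma integral_split {β : ℝ} (hβ : 0 < β) (ν : ℝ) {a : ℝ} (ha : 0 < a) :
    (∫ p in Ioi (0:ℝ), G β ν p) ≤
      (∫ p in Ioi a, G β ν p) + a * Real.log (1 + Real.exp (β * ν)) := by
  have hsplit : (Ioc (0:ℝ) a) ∪ Ioi a = Ioi 0 := Ioc_union_Ioi_eq_Ioi ha.le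
  have hu : (∫ p in Ioi (0:ℝ), G β ν p)
      = (∫ p in Ioc (0:ℝ) a, G β ν p) + ∫ p in Ioi a, G β ν p := by
    rw [← hsplit, setIntegral_union (Ioc_disjoint_Ioi le_rfl) measurableSet_Ioi
      ((G_integrable hβ ν).integrableOn) ((G_integrable hβ ν).integrableOn)]
  rw [hu]
  have h0 : G β ν 0 = Real.log (1 + Real.exp (β * ν)) := by simp [G]
  have : (∫ p in Ioc (0:ℝ) a, G β ν p) ≤ a * Real.log (1 + Real.exp (β * ν)) := by
    calc (∫ p in Ioc (0:ℝ) a, G β ν p) ≤ ∫ _ in Ioc (0:ℝ) a, G β ν 0 := by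
          apply setIntegral_mono_on ((G_integrable hβ ν).integrableOn)
            (integrableOn_const measure_Ioc_lt_top.ne) measurableSet_Ioc
          intro x hx
          exact G_anti hβ le_rfl (le_of_lt hx.1)
    _ = a * Real.log (1 + Real.exp (β * ν)) := by
          rw [setIntegral_const, measureReal_def, Real.volume_Ioc, ENNReal.toReal_ofReal (by linarith),
            smul_eq_mul, h0]
          ring_nf
  linarith




section pert
variable {β C Λ μ : ℝ} {εf : ℕ+ → ℝ}

lemma term_le (hβ : 0 < β) (hΛ : 0 < Λ)
    (hε : ∀ k : ℕ+, |εf k - π ^ 2 * (k : ℕ) ^ 2 / Λ ^ 2| ≤ C) (k : ℕ+) :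
    Real.log (1 + Real.exp (β * (μ - εf k))) ≤ G β (μ + C) (π * k / Λ) := by
  have h := abs_le.1 (hε k)
  apply lg_mono
  have e : (π * ((k:ℕ):ℝ) / Λ) ^ 2 = π ^ 2 * ((k:ℕ):ℝ) ^ 2 / Λ ^ 2 := by ring
  rw [e]
  nlinarith [h.1]

lemma term_ge (hβ : 0 < β) (hΛ : 0 < Λ)
    (hε : ∀ k : ℕ+, |εf k - π ^ 2 * (k : ℕ) ^ 2 / Λ ^ 2| ≤ C) (k : ℕ+) :
    G β (μ - C) (π * k / Λ) ≤ Real.log (1 + Real.exp (β * (μ - εf k))) := by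
  have h := abs_le.1 (hε k)
  apply lg_mono
  have e : (π * ((k:ℕ):ℝ) / Λ) ^ 2 = π ^ 2 * ((k:ℕ):ℝ) ^ 2 / Λ ^ 2 := by ring
  rw [e]
  nlinarith [h.2]

lemma pert_summable (hβ : 0 < β) (hΛ : 0 < Λ)
    (hε : ∀ k : ℕ+, |εf k - π ^ 2 * (k : ℕ) ^ 2 / Λ ^ 2| ≤ C) :
    Summable (fun k : ℕ+ => Real.log (1 + Real.exp (β * (μ - εf k)))) :=
  Summable.of_nonneg_of_le (fun _ => lg_nonneg _) (term_le hβ hΛ hε)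
    (free_summable hβ hΛ (μ + C))

lemma lnXi_le (hβ : 0 < β) (hΛ : 0 < Λ)
    (hε : ∀ k : ℕ+, |εf k - π ^ 2 * (k : ℕ) ^ 2 / Λ ^ 2| ≤ C) :
    lnXi β μ εf ≤ ∑' k : ℕ+, G β (μ + C) (π * k / Λ) :=
  Summable.tsum_le_tsum (term_le hβ hΛ hε) (pert_summable hβ hΛ hε) (free_summable hβ hΛ (μ + C))

lemma lnXi_ge (hβ : 0 < β) (hΛ : 0 < Λ)
    (hε : ∀ k : ℕ+, |εf k - π ^ 2 * (k : ℕ) ^ 2 / Λ ^ 2| ≤ C) :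
    ∑' k : ℕ+, G β (μ - C) (π * k / Λ) ≤ lnXi β μ εf :=
  Summable.tsum_le_tsum (term_ge hβ hΛ hε) (free_summable hβ hΛ (μ - C)) (pert_summable hβ hΛ hε)

end pert

lemma Omega_le {β C : ℝ} (hβ : 0 < β) (hC : 0 < C) {ε : ℝ → ℕ+ → ℝ}
    (hε : ∀ Λ : ℝ, 0 < Λ → ∀ k : ℕ+, |ε Λ k - π ^ 2 * (k : ℕ) ^ 2 / Λ ^ 2| ≤ C)
    {Ω : ℝ → ℝ} {μ : ℝ}
    (hΩ : Tendsto (fun Λ : ℝ => (1 / Λ) * lnXi β μ (ε Λ)) atTop (nhds (Ω μ))) :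
    Ω μ ≤ (1 / π) * ∫ p in Ioi (0:ℝ), G β (μ + C) p := by
  apply le_of_tendsto hΩ
  filter_upwards [eventually_gt_atTop (0:ℝ)] with Λ hΛ
  have h1 : lnXi β μ (ε Λ) ≤ ∑' k : ℕ+, G β (μ + C) (π * k / Λ) :=
    lnXi_le hβ hΛ (hε Λ hΛ)
  have h2 := sum_le_integral hβ hΛ (μ + C)
  have hπ : (0:ℝ) < π := Real.pi_pos
  calc (1 / Λ) * lnXi β μ (ε Λ) ≤ (1 / Λ) * ∑' k : ℕ+, G β (μ + C) (π * k / Λ) := by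
        apply mul_le_mul_of_nonneg_left h1 (by positivity)
  _ = (1 / π) * ((π / Λ) * ∑' k : ℕ+, G β (μ + C) (π * k / Λ)) := by
        field_simp
  _ ≤ (1 / π) * ∫ p in Ioi (0:ℝ), G β (μ + C) p := by
        apply mul_le_mul_of_nonneg_left h2 (by positivity)

lemma Omega_ge {β C : ℝ} (hβ : 0 < β) (hC : 0 < C) {ε : ℝ → ℕ+ → ℝ}
    (hε : ∀ Λ : ℝ, 0 < Λ → ∀ k : ℕ+, |ε Λ k - π ^ 2 * (k : ℕ) ^ 2 / Λ ^ 2| ≤ C)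
    {Ω : ℝ → ℝ} {μ : ℝ}
    (hΩ : Tendsto (fun Λ : ℝ => (1 / Λ) * lnXi β μ (ε Λ)) atTop (nhds (Ω μ))) :
    (1 / π) * (∫ p in Ioi (0:ℝ), G β (μ - C) p) ≤ Ω μ := by
  have hπ : (0:ℝ) < π := Real.pi_pos
  have hlim : Tendsto (fun Λ : ℝ =>
      (1 / π) * (∫ p in Ioi (0:ℝ), G β (μ - C) p)
        - (1 / Λ) * Real.log (1 + Real.exp (β * (μ - C)))) atTop
      (nhds ((1 / π) * (∫ p in Ioi (0:ℝ), G β (μ - C) p))) := by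
    have : Tendsto (fun Λ : ℝ => (1 / Λ) * Real.log (1 + Real.exp (β * (μ - C))))
        atTop (nhds 0) := by
      simpa using (tendsto_inv_atTop_zero.mul_const (Real.log (1 + Real.exp (β * (μ - C)))))
    simpa using tendsto_const_nhds.sub this
  apply le_of_tendsto_of_tendsto hlim hΩ
  filter_upwards [eventually_gt_atTop (0:ℝ)] with Λ hΛ
  have h1 : ∑' k : ℕ+, G β (μ - C) (π * k / Λ) ≤ lnXi β μ (ε Λ) :=
    lnXi_ge hβ hΛ (hε Λ hΛ)
  have h2 := integral_le_sum hβ hΛ (μ - C)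
  have h3 := integral_split hβ (μ - C) (a := π / Λ) (by positivity)
  show (1 / π) * (∫ p in Ioi (0:ℝ), G β (μ - C) p)
      - (1 / Λ) * Real.log (1 + Real.exp (β * (μ - C))) ≤ (1 / Λ) * lnXi β μ (ε Λ)
  have key : (π / Λ) * ∑' k : ℕ+, G β (μ - C) (π * k / Λ) ≥
      (∫ p in Ioi (0:ℝ), G β (μ - C) p) - (π / Λ) * Real.log (1 + Real.exp (β * (μ - C))) := by
    linarith
  have h4 : (1 / Λ) * ∑' k : ℕ+, G β (μ - C) (π * k / Λ) ≤ (1 / Λ) * lnXi β μ (ε Λ) :=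
    mul_le_mul_of_nonneg_left h1 (by positivity)
  have e : (1 / Λ) * ∑' k : ℕ+, G β (μ - C) (π * k / Λ)
      = (1 / π) * ((π / Λ) * ∑' k : ℕ+, G β (μ - C) (π * k / Λ)) := by field_simp
  have e2 : (1 / π) * ((∫ p in Ioi (0:ℝ), G β (μ - C) p)
        - (π / Λ) * Real.log (1 + Real.exp (β * (μ - C))))
      = (1 / π) * (∫ p in Ioi (0:ℝ), G β (μ - C) p)
        - (1 / Λ) * Real.log (1 + Real.exp (β * (μ - C))) := by
      rw [mul_sub]
      congr 1
      field_simp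
  have h5 := mul_le_mul_of_nonneg_left key (by positivity : (0:ℝ) ≤ 1 / π)
  rw [e2] at h5
  linarith [e ▸ h4]



lemma I_mono {β : ℝ} (hβ : 0 < β) {ν ν' : ℝ} (h : ν ≤ ν') :
    (1 / π) * (∫ p in Ioi (0:ℝ), G β ν p) ≤ (1 / π) * ∫ p in Ioi (0:ℝ), G β ν' p := by
  have hπ : (0:ℝ) < π := Real.pi_pos
  apply mul_le_mul_of_nonneg_left ?_ (by positivity)
  exact setIntegral_mono ((G_integrable hβ ν).integrableOn)
    ((G_integrable hβ ν').integrableOn) (G_mono_nu hβ h)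

lemma I_lower {β : ℝ} (hβ : 0 < β) {μ : ℝ} (hμ : 0 ≤ μ) :
    2 * β / (3 * π) * (μ * Real.sqrt μ) ≤ (1 / π) * ∫ p in Ioi (0:ℝ), G β μ p := by
  have hπ : (0:ℝ) < π := Real.pi_pos
  set s : ℝ := Real.sqrt μ with hsdef
  have hs0 : 0 ≤ s := Real.sqrt_nonneg μ
  have hs2 : s ^ 2 = μ := Real.sq_sqrt hμ
  have h1 : (∫ p in Ioc (0:ℝ) s, G β μ p) ≤ ∫ p in Ioi (0:ℝ), G β μ p := by
    apply setIntegral_mono_set ((G_integrable hβ μ).integrableOn)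
      (Filter.Eventually.of_forall fun p => G_nonneg β μ p)
      (HasSubset.Subset.eventuallyLE Ioc_subset_Ioi_self)
  have h2 : (∫ p in (0:ℝ)..s, β * (μ - p ^ 2)) ≤ ∫ p in (0:ℝ)..s, G β μ p := by
    apply intervalIntegral.integral_mono_on hs0
      ((continuous_const.mul (continuous_const.sub (continuous_pow 2))).intervalIntegrable _ _)
      ((G_cont β μ).intervalIntegrable _ _)
    intro x _
    exact lg_ge _
  have h3 : (∫ p in (0:ℝ)..s, β * (μ - p ^ 2)) = β * (μ * s - s ^ 3 / 3) := by
    rw [intervalIntegral.integral_const_mul,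
      intervalIntegral.integral_sub (intervalIntegrable_const)
        (intervalIntegral.intervalIntegrable_pow 2)]
    rw [intervalIntegral.integral_const, integral_pow, smul_eq_mul]
    push_cast
    ring
  have h4 : (∫ p in (0:ℝ)..s, G β μ p) = ∫ p in Ioc (0:ℝ) s, G β μ p :=
    intervalIntegral.integral_of_le hs0
  have h5 : β * (μ * s - s ^ 3 / 3) = 2 / 3 * β * (μ * s) := by
    have : s ^ 3 = μ * s := by
      calc s ^ 3 = s ^ 2 * s := by ring
      _ = μ * s := by rw [hs2]
    rw [this]; ring
  have h6 : 2 / 3 * β * (μ * s) ≤ ∫ p in Ioi (0:ℝ), G β μ p := by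
    rw [← h5, ← h3]
    calc (∫ p in (0:ℝ)..s, β * (μ - p ^ 2)) ≤ ∫ p in (0:ℝ)..s, G β μ p := h2
    _ = ∫ p in Ioc (0:ℝ) s, G β μ p := h4
    _ ≤ _ := h1
  calc 2 * β / (3 * π) * (μ * s) = (1 / π) * (2 / 3 * β * (μ * s)) := by ring
  _ ≤ _ := mul_le_mul_of_nonneg_left h6 (by positivity)

lemma D_bound {β C μ : ℝ} (hβ : 0 < β) (hC : 0 < C) (h1C : 1 ≤ μ + C) :
    (1 / π) * (∫ p in Ioi (0:ℝ), G β (μ + C) p)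
      - (1 / π) * (∫ p in Ioi (0:ℝ), G β (μ - C) p)
      ≤ (1 / π) * (2 * β * C * Real.sqrt (μ + C) + 1 / β) := by
  have hπ : (0:ℝ) < π := Real.pi_pos
  set a : ℝ := Real.sqrt (μ + C) with hadef
  have ha1 : 1 ≤ a := by
    rw [hadef]
    rw [show (1:ℝ) = Real.sqrt 1 by simp]
    exact Real.sqrt_le_sqrt h1C
  have ha0 : 0 < a := lt_of_lt_of_le one_pos ha1
  have ha2 : a ^ 2 = μ + C := Real.sq_sqrt (by linarith)
  set D : ℝ → ℝ := fun p => G β (μ + C) p - G β (μ - C) p with hDdef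
  have hDint : Integrable D := (G_integrable hβ (μ + C)).sub (G_integrable hβ (μ - C))
  have hsub : (∫ p in Ioi (0:ℝ), G β (μ + C) p) - (∫ p in Ioi (0:ℝ), G β (μ - C) p)
      = ∫ p in Ioi (0:ℝ), D p :=
    (integral_sub ((G_integrable hβ (μ + C)).integrableOn)
      ((G_integrable hβ (μ - C)).integrableOn)).symm
  have hsplit : (∫ p in Ioi (0:ℝ), D p)
      = (∫ p in Ioc (0:ℝ) a, D p) + ∫ p in Ioi a, D p := by
    rw [← Ioc_union_Ioi_eq_Ioi ha0.le,
      setIntegral_union (Ioc_disjoint_Ioi le_rfl) measurableSet_Ioi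
      hDint.integrableOn hDint.integrableOn]
  have hpart1 : (∫ p in Ioc (0:ℝ) a, D p) ≤ a * (2 * β * C) := by
    calc (∫ p in Ioc (0:ℝ) a, D p) ≤ ∫ _ in Ioc (0:ℝ) a, 2 * β * C := by
          apply setIntegral_mono_on hDint.integrableOn
            (integrableOn_const measure_Ioc_lt_top.ne) measurableSet_Ioc
          intro p _
          show G β (μ + C) p - G β (μ - C) p ≤ 2 * β * C
          have e : β * ((μ + C) - p ^ 2) = β * ((μ - C) - p ^ 2) + β * (2 * C) := by ring
          have := lg_shift (x := β * ((μ - C) - p ^ 2)) (c := β * (2 * C)) (by positivity)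
          unfold G
          rw [e]
          linarith
    _ = a * (2 * β * C) := by
          rw [setIntegral_const, measureReal_def, Real.volume_Ioc, ENNReal.toReal_ofReal (by linarith),
            smul_eq_mul]
          ring
  have hpart2 : (∫ p in Ioi a, D p) ≤ 1 / β := by
    have hba : 0 < β * a := by positivity
    have hval : (∫ p in Ioi a, Real.exp (β * a ^ 2) * Real.exp (-(β * a * p)))
        = (β * a)⁻¹ := by
      rw [MeasureTheory.integral_const_mul]
      have := integral_comp_mul_left_Ioi (fun x => Real.exp (-x)) a hba
      simp only [smul_eq_mul] at this
      rw [this, integral_exp_neg_Ioi, ← mul_assoc, mul_comm (Real.exp _) _, mul_assoc,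
        ← Real.exp_add]
      have e : β * a ^ 2 + -(β * a * a) = 0 := by ring
      rw [e, Real.exp_zero, mul_one]
    have hmono : (∫ p in Ioi a, D p)
        ≤ ∫ p in Ioi a, Real.exp (β * a ^ 2) * Real.exp (-(β * a * p)) := by
      apply setIntegral_mono_on hDint.integrableOn
        ?_ measurableSet_Ioi
      · intro p hp
        have hpa : a ≤ p := le_of_lt hp
        have h1 : D p ≤ G β (μ + C) p := by
          have := G_nonneg β (μ - C) p
          simp only [hDdef]
          linarith
        have h2 : G β (μ + C) p ≤ Real.exp (β * ((μ + C) - p ^ 2)) := lg_le_exp _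
        have h3 : β * ((μ + C) - p ^ 2) ≤ β * a ^ 2 + -(β * a * p) := by
          have hp0 : 0 ≤ p := le_trans ha0.le hpa
          have hap : a * p ≤ p ^ 2 := by nlinarith
          nlinarith [ha2]
        calc D p ≤ Real.exp (β * ((μ + C) - p ^ 2)) := le_trans h1 h2
        _ ≤ Real.exp (β * a ^ 2 + -(β * a * p)) := Real.exp_le_exp.2 h3
        _ = Real.exp (β * a ^ 2) * Real.exp (-(β * a * p)) := Real.exp_add _ _
      · have h := (exp_neg_integrableOn_Ioi a hba).const_mul (Real.exp (β * a ^ 2))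
        simp only [neg_mul] at h; exact h
    have hinv : (β * a)⁻¹ ≤ 1 / β := by
      rw [one_div]
      apply inv_anti₀ hβ
      nlinarith
    linarith [hval ▸ hmono]
  have htot : (∫ p in Ioi (0:ℝ), D p) ≤ 2 * β * C * a + 1 / β := by
    rw [hsplit]
    have := hpart1
    nlinarith
  calc (1 / π) * (∫ p in Ioi (0:ℝ), G β (μ + C) p)
      - (1 / π) * (∫ p in Ioi (0:ℝ), G β (μ - C) p)
      = (1 / π) * ((∫ p in Ioi (0:ℝ), G β (μ + C) p)
          - (∫ p in Ioi (0:ℝ), G β (μ - C) p)) := by ring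
  _ = (1 / π) * ∫ p in Ioi (0:ℝ), D p := by rw [hsub]
  _ ≤ (1 / π) * (2 * β * C * a + 1 / β) :=
      mul_le_mul_of_nonneg_left htot (by positivity)

lemma key_bound {β C : ℝ} (hβ : 0 < β) (hC : 0 < C) {ε : ℝ → ℕ+ → ℝ}
    (hε : ∀ Λ : ℝ, 0 < Λ → ∀ k : ℕ+, |ε Λ k - π ^ 2 * (k : ℕ) ^ 2 / Λ ^ 2| ≤ C)
    {Ω : ℝ → ℝ}
    (hΩ : ∀ μ : ℝ, Tendsto (fun Λ : ℝ => (1 / Λ) * lnXi β μ (ε Λ)) atTop (nhds (Ω μ)))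
    {μ : ℝ} (hμ : max 1 C ≤ μ) :
    |Ω μ / ((1 / π) * ∫ p in Ioi (0:ℝ), G β μ p) - 1| ≤
      (3 * (2 * β * C * Real.sqrt 2 + 1 / β) / (2 * β)) / μ := by
  have hπ : (0:ℝ) < π := Real.pi_pos
  set M : ℝ := 2 * β * C * Real.sqrt 2 + 1 / β with hM
  have hM0 : 0 < M := by positivity
  set K : ℝ := 3 * M / (2 * β) with hK
  have hK0 : 0 < K := by positivity
  have hμ1 : 1 ≤ μ := le_trans (le_max_left _ _) hμ
  have hμC : C ≤ μ := le_trans (le_max_right _ _) hμ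
  have hμ0 : (0:ℝ) < μ := lt_of_lt_of_le one_pos hμ1
  have hsμ : (0:ℝ) < Real.sqrt μ := Real.sqrt_pos.2 hμ0
  have hsμ1 : (1:ℝ) ≤ Real.sqrt μ := Real.one_le_sqrt.2 hμ1
  have hIl := I_lower hβ (le_of_lt hμ0)
  have hIpos : 0 < (1 / π) * ∫ p in Ioi (0:ℝ), G β μ p :=
    lt_of_lt_of_le (by positivity) hIl
  have hOle := Omega_le hβ hC hε (hΩ μ)
  have hOge := Omega_ge hβ hC hε (hΩ μ)
  have hDb := D_bound (μ := μ) hβ hC (by linarith)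
  have hm1 := I_mono (ν := μ - C) (ν' := μ) hβ (by linarith)
  have hm2 := I_mono (ν := μ) (ν' := μ + C) hβ (by linarith)
  have habs : |Ω μ - (1 / π) * ∫ p in Ioi (0:ℝ), G β μ p| ≤
      (1 / π) * (∫ p in Ioi (0:ℝ), G β (μ + C) p)
        - (1 / π) * (∫ p in Ioi (0:ℝ), G β (μ - C) p) :=
    abs_le.2 ⟨by linarith, by linarith⟩
  have hsqrt : Real.sqrt (μ + C) ≤ Real.sqrt 2 * Real.sqrt μ := by
    rw [← Real.sqrt_mul (by norm_num : (0:ℝ) ≤ 2)]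
    exact Real.sqrt_le_sqrt (by linarith)
  have hD2 : (1 / π) * (∫ p in Ioi (0:ℝ), G β (μ + C) p)
      - (1 / π) * (∫ p in Ioi (0:ℝ), G β (μ - C) p) ≤ (1 / π) * (M * Real.sqrt μ) := by
    apply le_trans hDb
    apply mul_le_mul_of_nonneg_left ?_ (by positivity)
    rw [hM]
    have h1 : 2 * β * C * Real.sqrt (μ + C) ≤ 2 * β * C * (Real.sqrt 2 * Real.sqrt μ) :=
      mul_le_mul_of_nonneg_left hsqrt (by positivity)
    have h2 : 1 / β ≤ 1 / β * Real.sqrt μ := by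
      nth_rewrite 1 [← mul_one (1 / β)]
      exact mul_le_mul_of_nonneg_left hsμ1 (by positivity)
    nlinarith
  rw [div_sub_one (ne_of_gt hIpos), abs_div, abs_of_pos hIpos,
    div_le_div_iff₀ hIpos hμ0]
  have hL : |Ω μ - (1 / π) * ∫ p in Ioi (0:ℝ), G β μ p| * μ
      ≤ (1 / π) * (M * Real.sqrt μ) * μ :=
    mul_le_mul_of_nonneg_right (le_trans habs hD2) hμ0.le
  have hR : K * (2 * β / (3 * π) * (μ * Real.sqrt μ))
      ≤ K * ((1 / π) * ∫ p in Ioi (0:ℝ), G β μ p) :=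
    mul_le_mul_of_nonneg_left hIl hK0.le
  have heq : K * (2 * β / (3 * π) * (μ * Real.sqrt μ))
      = (1 / π) * (M * Real.sqrt μ) * μ := by
    rw [hK]
    field_simp
  linarith

/-- Theorem 3 of the paper: if the eigenvalues `ε_k(Λ)` are within `C` of the free
Dirichlet eigenvalues and the thermodynamic limit `Ω_μ^{(V)}` of `(1/Λ) ln Ξ_μ^{(V)}(Λ)`
exists for every `μ`, then `Ω_μ^{(V)} / Ω_μ^{(0)} → 1` as `μ → ∞`, where
`Ω_μ^{(0)} = (1/π) ∫_0^∞ ln(1 + e^{β(μ−p²)}) dp`. -/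
theorem stmt_2 (β : ℝ) (hβ : 0 < β) (C : ℝ) (hC : 0 < C)
    (ε : ℝ → ℕ+ → ℝ)
    (hε : ∀ Λ : ℝ, 0 < Λ → ∀ k : ℕ+, |ε Λ k - π ^ 2 * (k : ℕ) ^ 2 / Λ ^ 2| ≤ C)
    (Ω : ℝ → ℝ)
    (hΩ : ∀ μ : ℝ, Tendsto (fun Λ : ℝ => (1 / Λ) * lnXi β μ (ε Λ)) atTop (nhds (Ω μ))) :
    Tendsto (fun μ =>
        Ω μ / ((1 / π) * ∫ p in Set.Ioi (0 : ℝ), Real.log (1 + Real.exp (β * (μ - p ^ 2)))))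
      atTop (nhds 1) := by
  show Tendsto (fun μ => Ω μ / ((1 / π) * ∫ p in Ioi (0:ℝ), G β μ p)) atTop (nhds 1)
  have h0 : Tendsto
      (fun μ => Ω μ / ((1 / π) * ∫ p in Ioi (0:ℝ), G β μ p) - 1) atTop (nhds 0) := by
    apply squeeze_zero_norm' ?_
      (Filter.Tendsto.div_atTop
        (tendsto_const_nhds (x := 3 * (2 * β * C * Real.sqrt 2 + 1 / β) / (2 * β)))
        tendsto_id)
    filter_upwards [eventually_ge_atTop (max 1 C)] with μ hμ
    rw [Real.norm_eq_abs]
    exact key_bound hβ hC hε hΩ hμ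
  have h1 := h0.add (tendsto_const_nhds (x := (1:ℝ)))
  simpa using h1
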